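/- If every nontrivial equation over every locally indicable group is solvable over that group, then every nontrivial generalized equation with locally indicable variable group over a locally indicable group is solvable over that group. -/

import Mathlib

universe u v

/-- A group is locally indicable if every nontrivial finitely generated subgroup
admits a surjective homomorphism onto the infinite cyclic group. -/
def LocallyIndicable (G : Type u) [Group G] : Prop :=
  ∀ S : Subgroup G, S ≠ ⊥ → S.FG →
    ∃ f : S →* Multiplicative ℤ, Function.Surjective f

/-- A generalized equation `w ∈ G * T` is nontrivial if `w` is not conjugate in
`G * T` to an element of `G`. -/
def GenEqNontrivial (G : Type u) (T : Type v) [Group G] [Group T]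
    (w : Monoid.Coprod G T) : Prop :=
  ¬ ∃ g : G, IsConj (Monoid.Coprod.inl g) w

/-- A generalized equation `w ∈ G * T` is solvable over `G` if there is a group `G'`
containing `G` as a subgroup (via an injective homomorphism) and a homomorphism
`T →* G'` such that the induced map `G * T →* G'` kills `w`. -/
def GenEqSolvable (G : Type u) (T : Type v) [Group G] [Group T]
    (w : Monoid.Coprod G T) : Prop :=
  ∃ (G' : Type (max u v)) (_ : Group G') (i : G →* G') (f : T →* G'),
    Function.Injective i ∧ Monoid.Coprod.lift i f w = 1

set_option linter.unusedSectionVars false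
open Monoid Monoid.CoprodI

namespace BrodskiiAux

section General
variable {ι : Type*} {M : ι → Type*} [∀ i, Group (M i)]

def prodL (l : List (Σ i, M i)) : CoprodI M := (l.map fun p => of p.2).prod

def IsRed (l : List (Σ i, M i)) : Prop :=
  (∀ p ∈ l, p.2 ≠ 1) ∧ l.Chain' (fun p q => p.1 ≠ q.1)

def invrev (l : List (Σ i, M i)) : List (Σ i, M i) :=
  (l.map fun p => ⟨p.1, p.2⁻¹⟩).reverse

def Pal (s : List (Σ i, M i)) (i : ι) (m : M i) : List (Σ i, M i) :=
  s ++ ⟨i, m⟩ :: invrev s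

@[simp] theorem prodL_nil : prodL ([] : List (Σ i, M i)) = 1 := rfl

@[simp] theorem prodL_cons (a : Σ i, M i) (l : List (Σ i, M i)) :
    prodL (a :: l) = of a.2 * prodL l := by simp [prodL]

@[simp] theorem prodL_append (l₁ l₂ : List (Σ i, M i)) :
    prodL (l₁ ++ l₂) = prodL l₁ * prodL l₂ := by simp [prodL]

@[simp] theorem invrev_nil : invrev ([] : List (Σ i, M i)) = [] := rfl

theorem invrev_cons (a : Σ i, M i) (l : List (Σ i, M i)) :
    invrev (a :: l) = invrev l ++ [⟨a.1, a.2⁻¹⟩] := by simp [invrev]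

theorem exists_isRed_prodL (y : CoprodI M) : ∃ l, IsRed l ∧ prodL l = y := by
  classical
  refine ⟨(Word.equiv y).toList, ⟨(Word.equiv y).ne_one, (Word.equiv y).chain_ne⟩, ?_⟩
  have : prodL (Word.equiv y).toList = Word.prod (Word.equiv y) := rfl
  rw [this]
  exact (Word.equiv (M := M)).symm_apply_apply y

theorem prodL_inj {l₁ l₂ : List (Σ i, M i)} (h₁ : IsRed l₁) (h₂ : IsRed l₂)
    (h : prodL l₁ = prodL l₂) : l₁ = l₂ := by
  classical
  have e : (Word.equiv (M := M)).symm ⟨l₁, h₁.1, h₁.2⟩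
      = (Word.equiv (M := M)).symm ⟨l₂, h₂.1, h₂.2⟩ := h
  have := (Word.equiv (M := M)).symm.injective e
  exact congrArg Word.toList this

theorem mem_invrev {l : List (Σ i, M i)} {x : Σ i, M i} :
    x ∈ invrev l ↔ ∃ p ∈ l, x = ⟨p.1, p.2⁻¹⟩ := by
  simp only [invrev, List.mem_reverse, List.mem_map]
  tauto

theorem chain'_invrev {l : List (Σ i, M i)} (h : l.Chain' (fun p q => p.1 ≠ q.1)) :
    (invrev l).Chain' (fun p q => p.1 ≠ q.1) := by
  rw [invrev, List.Chain', List.isChain_reverse]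
  refine (List.isChain_map _).mpr ?_
  exact h.imp (fun {a b} hab => by simpa [flip] using Ne.symm hab)

theorem head?_invrev (l : List (Σ i, M i)) :
    (invrev l).head? = l.getLast?.map (fun p => ⟨p.1, p.2⁻¹⟩) := by
  rw [invrev, List.head?_reverse, List.getLast?_map]

theorem getLast?_invrev (l : List (Σ i, M i)) :
    (invrev l).getLast? = l.head?.map (fun p => ⟨p.1, p.2⁻¹⟩) := by
  rw [invrev, List.getLast?_reverse, List.head?_map]

theorem isRed_pal {s : List (Σ i, M i)} {i : ι} {m : M i} (hm : m ≠ 1) (hs : IsRed s)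
    (hlast : ∀ x ∈ s.getLast?, x.1 ≠ i) : IsRed (Pal s i m) := by
  constructor
  · intro p hp
    rcases List.mem_append.mp hp with h | h
    · exact hs.1 p h
    · rcases List.mem_cons.mp h with rfl | h
      · exact hm
      · rcases mem_invrev.mp h with ⟨q, hq, rfl⟩
        simpa using hs.1 q hq
  · rw [Pal, List.Chain', List.isChain_append]
    refine ⟨hs.2, ?_, ?_⟩
    · rw [List.isChain_cons]
      refine ⟨?_, chain'_invrev hs.2⟩
      intro y hy
      rw [head?_invrev] at hy
      rcases Option.map_eq_some_iff.mp hy with ⟨p, hp, rfl⟩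
      exact (hlast p hp).symm
    · intro x hx y hy
      simp only [List.head?_cons, Option.mem_def, Option.some.injEq] at hy
      subst hy
      exact hlast x hx

theorem isRed_cons {a : Σ i, M i} {l : List (Σ i, M i)} :
    IsRed (a :: l) ↔ a.2 ≠ 1 ∧ (∀ x ∈ l.head?, a.1 ≠ x.1) ∧ IsRed l := by
  simp only [IsRed, List.Chain', List.isChain_cons, List.mem_cons, forall_eq_or_imp]
  tauto

theorem isRed_append {l₁ l₂ : List (Σ i, M i)} :
    IsRed (l₁ ++ l₂) ↔ IsRed l₁ ∧ IsRed l₂ ∧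
      ∀ x ∈ l₁.getLast?, ∀ y ∈ l₂.head?, x.1 ≠ y.1 := by
  constructor
  · rintro ⟨h1, h2⟩
    rw [List.Chain', List.isChain_append] at h2
    exact ⟨⟨fun p hp => h1 p (List.mem_append.mpr (.inl hp)), h2.1⟩,
           ⟨fun p hp => h1 p (List.mem_append.mpr (.inr hp)), h2.2.1⟩, h2.2.2⟩
  · rintro ⟨⟨h1, h2⟩, ⟨h3, h4⟩, h5⟩
    exact ⟨fun p hp => (List.mem_append.mp hp).elim (h1 p) (h3 p),
           List.isChain_append.mpr ⟨h2, h4, h5⟩⟩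

theorem getLast?_mem_cons {a x : Σ i, M i} {l : List (Σ i, M i)}
    (h : x ∈ l.getLast?) : x ∈ (a :: l).getLast? := by
  cases l with
  | nil => simp at h
  | cons b l => rwa [List.getLast?_cons_cons]

theorem prodL_pal_cons (a : Σ i, M i) (s : List (Σ i, M i)) (i : ι) (m : M i) :
    prodL (Pal (a :: s) i m) = of a.2 * prodL (Pal s i m) * (of a.2)⁻¹ := by
  simp [Pal, invrev_cons, prodL, List.map_append, List.prod_append, mul_assoc]

theorem pal_list (l : List (Σ i, M i)) (hl : IsRed l) (i : ι) (m : M i) (hm : m ≠ 1) :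
    ∃ (s : List (Σ i, M i)) (m' : M i), m' ≠ 1 ∧ IsRed s ∧ (∀ x ∈ s.getLast?, x.1 ≠ i) ∧
      prodL l * of m * (prodL l)⁻¹ = prodL (Pal s i m') := by
  induction l with
  | nil =>
    refine ⟨[], m, hm, ⟨by simp, List.isChain_nil⟩, by simp, ?_⟩
    simp [Pal, invrev]
  | cons a l ih =>
    rcases isRed_cons.mp hl with ⟨ha1, hhead, hl'⟩
    obtain ⟨s₁, m₁, hm₁, hs₁, hlast₁, heq⟩ := ih hl'
    have hy : prodL (a :: l) * of m * (prodL (a :: l))⁻¹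
        = of a.2 * prodL (Pal s₁ i m₁) * (of a.2)⁻¹ := by
      rw [prodL_cons, ← heq]
      group
    cases s₁ with
    | nil =>
      obtain ⟨p, k⟩ := a
      by_cases hpi : p = i
      · subst hpi
        refine ⟨[], k * m₁ * k⁻¹, by simp [hm₁], ⟨by simp, List.isChain_nil⟩, by simp, ?_⟩
        rw [hy]
        simp [Pal, invrev, mul_assoc]
      · refine ⟨[⟨p, k⟩], m₁, hm₁, ⟨by simpa using ha1, List.isChain_singleton _⟩, ?_, ?_⟩
        · simpa using hpi
        · rw [hy]
          simp [Pal, invrev, mul_assoc]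
    | cons c s₁' =>
      have hlast₁' : ∀ x ∈ s₁'.getLast?, x.1 ≠ i := fun x hx => hlast₁ x (getLast?_mem_cons hx)
      rcases isRed_cons.mp hs₁ with ⟨hc1, hchead, hs₁'⟩
      by_cases hpq : a.1 = c.1
      · obtain ⟨p, k⟩ := a
        obtain ⟨q, c₂⟩ := c
        dsimp at hpq
        subst hpq
        by_cases hkc : k * c₂ = 1
        · refine ⟨s₁', m₁, hm₁, hs₁', hlast₁', ?_⟩
          rw [hy, prodL_pal_cons]
          have : of k * (of c₂ * prodL (Pal s₁' i m₁) * (of c₂)⁻¹) * (of k)⁻¹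
              = of (k * c₂) * prodL (Pal s₁' i m₁) * (of (k * c₂))⁻¹ := by
            simp [map_mul, mul_assoc]
          rw [this, hkc]
          simp
        · refine ⟨⟨p, k * c₂⟩ :: s₁', m₁, hm₁, isRed_cons.mpr ⟨hkc, hchead, hs₁'⟩, ?_, ?_⟩
          · cases s₁' with
            | nil =>
              intro x hx
              simp only [List.getLast?_singleton, Option.mem_def, Option.some.injEq] at hx
              subst hx
              exact hlast₁ ⟨p, c₂⟩ (by simp)
            | cons d s'' =>
              intro x hx
              rw [List.getLast?_cons_cons] at hx
              exact hlast₁' x hx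
          · rw [hy, prodL_pal_cons, prodL_pal_cons]
            simp [map_mul, mul_assoc]
      · refine ⟨⟨a.1, a.2⟩ :: c :: s₁', m₁, hm₁, ?_, ?_, ?_⟩
        · exact isRed_cons.mpr ⟨ha1, by simpa using hpq, hs₁⟩
        · intro x hx
          rw [List.getLast?_cons_cons] at hx
          exact hlast₁ x hx
        · rw [hy]
          simp [prodL_pal_cons, mul_assoc]

end General

section Concrete

variable (G : Type u) (T : Type v) [Group G] [Group T]

/-- the two-element family `{G, T}` (with `ULift`s to equalize universes) -/
def Fam : Bool → Type (max u v) := fun b => match b with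
  | true => ULift.{v} G
  | false => ULift.{u} T

/-- the two-element family `{G × T, ℤ}` -/
def Ham : Bool → Type (max u v) := fun b => match b with
  | true => G × T
  | false => ULift.{max u v} (Multiplicative ℤ)

instance (b : Bool) : Group (Fam G T b) := by cases b <;> (dsimp [Fam]; infer_instance)

instance (b : Bool) : Group (Ham G T b) := by cases b <;> (dsimp [Ham]; infer_instance)

/-- the stable letter -/
def tlet : CoprodI (Ham G T) :=
  of (i := false) (ULift.up (Multiplicative.ofAdd (1 : ℤ)))

/-- the encoding homomorphism: `g ↦ (g,1)`, `x ↦ t (1,x) t⁻¹` -/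
def theI : CoprodI (Fam G T) →* CoprodI (Ham G T) :=
  CoprodI.lift fun b => match b with
    | true => (of (i := (true : Bool))).comp
        ((MonoidHom.inl G T).comp (MulEquiv.ulift (α := G)).toMonoidHom)
    | false => ((MulAut.conj (tlet G T)).toMonoidHom).comp
        ((of (i := (true : Bool))).comp
          ((MonoidHom.inr G T).comp (MulEquiv.ulift (α := T)).toMonoidHom))

theorem theI_of_true (g : ULift.{v} G) :
    theI G T (of (i := true) g) = of (i := (true : Bool)) ((g.down, 1) : G × T) := by
  simp [theI, CoprodI.lift_of]
  rfl

theorem theI_of_false (x : ULift.{u} T) :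
    theI G T (of (i := false) x)
      = tlet G T * of (i := (true : Bool)) ((1, x.down) : G × T) * (tlet G T)⁻¹ := by
  simp [theI, CoprodI.lift_of]
  rfl

universe w

theorem up_ofAdd_ne_one :
    (ULift.up (Multiplicative.ofAdd (1 : ℤ)) : ULift.{w} (Multiplicative ℤ)) ≠ 1 := by
  intro h
  exact absurd (congrArg ULift.down h) (by decide)

/-- expansion of a letter -/
def blk : (Σ b, Fam G T b) → List (Σ b, Ham G T b)
  | ⟨true, g⟩ => [⟨true, ((g.down, 1) : G × T)⟩]
  | ⟨false, x⟩ => [⟨false, ULift.up (Multiplicative.ofAdd (1 : ℤ))⟩,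
      ⟨true, ((1, x.down) : G × T)⟩,
      ⟨false, (ULift.up (Multiplicative.ofAdd (1 : ℤ)))⁻¹⟩]

def expandL (l : List (Σ b, Fam G T b)) : List (Σ b, Ham G T b) := l.flatMap (blk G T)

theorem prodL_blk (p : Σ b, Fam G T b) : prodL (blk G T p) = theI G T (of p.2) := by
  obtain ⟨b, m⟩ := p
  cases b
  · dsimp only
    erw [theI_of_false]
    simp only [blk, prodL_cons, prodL_nil, mul_one, tlet]
    erw [← map_inv]
    simp [mul_assoc]
  · dsimp only
    erw [theI_of_true]
    simp [blk]

@[simp] theorem expandL_nil : expandL G T [] = [] := rfl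

theorem expandL_cons (p : Σ b, Fam G T b) (l : List (Σ b, Fam G T b)) :
    expandL G T (p :: l) = blk G T p ++ expandL G T l := by
  simp [expandL]

theorem expandL_append (l₁ l₂ : List (Σ b, Fam G T b)) :
    expandL G T (l₁ ++ l₂) = expandL G T l₁ ++ expandL G T l₂ := by
  simp [expandL]

theorem prodL_expandL (l : List (Σ b, Fam G T b)) :
    prodL (expandL G T l) = theI G T (prodL l) := by
  induction l with
  | nil => simp
  | cons p l ih => rw [expandL_cons, prodL_append, prodL_cons, ih, map_mul, prodL_blk]

theorem blk_ne_nil (p : Σ b, Fam G T b) : blk G T p ≠ [] := by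
  obtain ⟨b, m⟩ := p; cases b <;> simp [blk]

theorem blk_head_fst (p : Σ b, Fam G T b) :
    ((blk G T p).head?).map Sigma.fst = some p.1 := by
  obtain ⟨b, m⟩ := p; cases b <;> simp [blk]

theorem blk_getLast_fst (p : Σ b, Fam G T b) :
    ((blk G T p).getLast?).map Sigma.fst = some p.1 := by
  obtain ⟨b, m⟩ := p; cases b <;> simp [blk]

theorem expandL_head_fst (p : Σ b, Fam G T b) (l : List (Σ b, Fam G T b)) :
    ((expandL G T (p :: l)).head?).map Sigma.fst = some p.1 := by
  rw [expandL_cons]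
  cases hb : (blk G T p).head? with
  | none => exact absurd (List.head?_eq_none_iff.mp hb) (blk_ne_nil G T p)
  | some x =>
    rw [List.head?_append_of_ne_nil _ (blk_ne_nil G T p)] at *
    rw [hb]
    have := blk_head_fst G T p
    rw [hb] at this
    simpa using this

theorem expandL_getLast_fst (l : List (Σ b, Fam G T b)) (p : Σ b, Fam G T b) :
    ((expandL G T (l ++ [p])).getLast?).map Sigma.fst = some p.1 := by
  rw [expandL_append]
  rw [List.getLast?_append_of_ne_nil _ ?h]
  case h =>
    simpa [expandL] using blk_ne_nil G T p
  have : expandL G T [p] = blk G T p := by simp [expandL]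
  rw [this, blk_getLast_fst]

theorem isRed_expandL {l : List (Σ b, Fam G T b)} (hl : IsRed l) : IsRed (expandL G T l) := by
  induction l with
  | nil => exact ⟨by simp, List.isChain_nil⟩
  | cons a l ih =>
    rcases isRed_cons.mp hl with ⟨ha1, hhead, hl'⟩
    rw [expandL_cons]
    rw [isRed_append]
    refine ⟨?_, ih hl', ?_⟩
    · constructor
      · obtain ⟨b, m⟩ := a
        cases b
        · have hm : m.down ≠ 1 := fun h => ha1 (ULift.down_injective h)
          intro x hx
          simp only [blk, List.mem_cons, List.mem_singleton, List.not_mem_nil, or_false] at hx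
          rcases hx with rfl | rfl | rfl
          · exact up_ofAdd_ne_one
          · exact fun h => hm (congrArg Prod.snd h)
          · exact fun h => up_ofAdd_ne_one (inv_eq_one.mp h)
        · have hm : m.down ≠ 1 := fun h => ha1 (ULift.down_injective h)
          intro x hx
          simp only [blk, List.mem_singleton] at hx
          subst hx
          exact fun h => hm (congrArg Prod.fst h)
      · obtain ⟨b, m⟩ := a
        cases b <;> simp [blk, List.Chain']
    · intro x hx y hy
      cases l with
      | nil => simp [expandL] at hy
      | cons c l' =>
        have h1 := blk_getLast_fst G T a
        have h2 := expandL_head_fst G T c l'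
        rw [Option.mem_def] at hx hy
        rw [hx] at h1
        rw [hy] at h2
        simp only [Option.map_some, Option.some.injEq] at h1 h2
        rw [h1, h2]
        exact isRed_cons.mp hl |>.2.1 c (by simp)

theorem key (n : ℕ) : ∀ (l : List (Σ b, Fam G T b)), l.length ≤ n → IsRed l →
    (∃ (u : CoprodI (Ham G T)) (m : G × T),
        u * of (i := (true : Bool)) m * u⁻¹ = theI G T (prodL l)) →
    ∃ (b : Bool) (m' : Fam G T b), IsConj (of m') (prodL l) := by
  induction n with
  | zero =>
    intro l hlen _ _
    have : l = [] := List.length_eq_zero_iff.mp (Nat.le_zero.mp hlen)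
    subst this
    refine ⟨true, 1, ?_⟩
    rw [map_one, prodL_nil]
  | succ n ih =>
    intro l hlen hl hu
    cases l with
    | nil =>
      refine ⟨true, 1, ?_⟩
      rw [map_one, prodL_nil]
    | cons a l₀ =>
      rcases List.eq_nil_or_concat' l₀ with rfl | ⟨mid, b, rfl⟩
      · exact ⟨a.1, a.2, by simpa using IsConj.refl (of a.2)⟩
      · obtain ⟨u, m, hum⟩ := hu
        by_cases hm1 : m = 1
        · exfalso
          have h1 : theI G T (prodL (a :: (mid ++ [b]))) = 1 := by
            rw [← hum, hm1]
            simp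
            exact map_one _
          have h2 : prodL (expandL G T (a :: (mid ++ [b])))
              = prodL ([] : List (Σ b, Ham G T b)) := by
            rw [prodL_expandL, h1, prodL_nil]
          have h3 := prodL_inj (isRed_expandL G T hl) ⟨by simp, List.isChain_nil⟩ h2
          rw [expandL_cons] at h3
          exact blk_ne_nil G T a (List.append_eq_nil_iff.mp h3).1
        · obtain ⟨lu, hlu, hlueq⟩ := exists_isRed_prodL u
          obtain ⟨s, m', hm', hs, hslast, hpal⟩ := pal_list lu hlu true m hm1
          rw [hlueq] at hpal
          have hexp : expandL G T (a :: (mid ++ [b])) = Pal s true m' := by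
            refine prodL_inj (isRed_expandL G T hl) (isRed_pal hm' hs hslast) ?_
            rw [prodL_expandL, ← hum, hpal]
          by_cases hab : a.1 = b.1
          · -- rotation case
            obtain ⟨qa, a2⟩ := a
            obtain ⟨qb, b2⟩ := b
            dsimp at hab
            subst hab
            cases mid with
            | nil =>
              exfalso
              rcases isRed_cons.mp hl with ⟨_, hhead, _⟩
              exact hhead ⟨qa, b2⟩ (by simp) rfl
            | cons c mid' =>
              rcases isRed_cons.mp hl with ⟨ha2, hheadl, hrest⟩
              have hqac : qa ≠ c.1 := hheadl c (by simp)
              have hmidred : IsRed (c :: mid') := (isRed_append.mp hrest).1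
              have hw' : of b2 * prodL (⟨qa, a2⟩ :: ((c :: mid') ++ [⟨qa, b2⟩]))
                  * (of b2)⁻¹ = of (b2 * a2) * prodL (c :: mid') := by
                simp only [prodL_cons, prodL_append, prodL_nil, map_mul, mul_one]
                group
              have hell : ∀ l' : List (Σ b, Fam G T b),
                  prodL l' = of (b2 * a2) * prodL (c :: mid') →
                  (∃ (u' : CoprodI (Ham G T)) (m'' : G × T),
                    u' * of (i := (true : Bool)) m'' * u'⁻¹ = theI G T (prodL l')) := by
                intro l' hl'
                refine ⟨theI G T (of b2) * u, m, ?_⟩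
                rw [hl', ← hw', map_mul, map_mul, map_inv, ← hum]
                group
              have hfin : ∀ l' : List (Σ b, Fam G T b),
                  prodL l' = of (b2 * a2) * prodL (c :: mid') → l'.length ≤ n → IsRed l' →
                  ∃ (b' : Bool) (m'' : Fam G T b'),
                    IsConj (of m'') (prodL (⟨qa, a2⟩ :: ((c :: mid') ++ [⟨qa, b2⟩]))) := by
                intro l' hl' hlen' hred'
                obtain ⟨b', m'', hconj⟩ := ih l' hlen' hred' (hell l' hl')
                refine ⟨b', m'', hconj.trans ?_⟩
                rw [hl', ← hw']
                exact (isConj_iff.mpr ⟨(of b2)⁻¹, by group⟩)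
              have hlenl : mid'.length + 3 ≤ n + 1 := by simp at hlen; omega
              by_cases hba : b2 * a2 = 1
              · refine hfin (c :: mid') ?_ ?_ hmidred
                · rw [hba, map_one, one_mul]
                · simp only [List.length_cons]
                  omega
              · refine hfin (⟨qa, b2 * a2⟩ :: c :: mid') ?_ ?_ ?_
                · rw [prodL_cons]
                · simp only [List.length_cons]
                  omega
                · exact isRed_cons.mpr ⟨hba, by simpa using hqac, hmidred⟩
          · -- indices differ: impossible
            exfalso
            cases s with
            | nil =>
              have hlena := congrArg List.length hexp
              rw [expandL_cons, expandL_append] at hlena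
              simp only [List.length_append, Pal, invrev_nil, List.nil_append,
                List.length_cons, List.length_nil] at hlena
              have h1 : 0 < (blk G T a).length := List.length_pos_iff.mpr (blk_ne_nil G T a)
              have h2 : 0 < (expandL G T [b]).length := by
                have : expandL G T [b] = blk G T b := by simp [expandL]
                rw [this]
                exact List.length_pos_iff.mpr (blk_ne_nil G T b)
              omega
            | cons c s' =>
              -- first index
              have hhead : ((expandL G T (a :: (mid ++ [b]))).head?).map Sigma.fst
                  = some c.1 := by
                rw [hexp]
                rfl
              have hca : c.1 = a.1 := by
                have := expandL_head_fst G T a (mid ++ [b])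
                rw [hhead] at this
                exact (Option.some.injEq _ _).mp this
              -- last index
              have hlast : ((expandL G T (a :: (mid ++ [b]))).getLast?).map Sigma.fst
                  = some c.1 := by
                rw [hexp]
                have hp : Pal (c :: s') true m'
                    = (c :: s' ++ ⟨true, m'⟩ :: invrev s') ++ [⟨c.1, c.2⁻¹⟩] := by
                  simp [Pal, invrev_cons]
                rw [hp, List.getLast?_concat]
                rfl
              have hcb : c.1 = b.1 := by
                have := expandL_getLast_fst G T (a :: mid) b
                rw [List.cons_append] at this
                rw [hlast] at this
                exact (Option.some.injEq _ _).mp this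
              exact hab (hca.symm.trans hcb)

/-- iso `G ∗ T ≃ CoprodI (Fam G T)` -/
def eCto : Monoid.Coprod G T →* CoprodI (Fam G T) :=
  Coprod.lift ((of (i := (true : Bool))).comp (MulEquiv.ulift (α := G)).symm.toMonoidHom)
    ((of (i := (false : Bool))).comp (MulEquiv.ulift (α := T)).symm.toMonoidHom)

def eCfrom : CoprodI (Fam G T) →* Monoid.Coprod G T :=
  CoprodI.lift fun b => match b with
    | true => Coprod.inl.comp (MulEquiv.ulift (α := G)).toMonoidHom
    | false => Coprod.inr.comp (MulEquiv.ulift (α := T)).toMonoidHom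

theorem eCfrom_eCto (w : Monoid.Coprod G T) : eCfrom G T (eCto G T w) = w := by
  have : (eCfrom G T).comp (eCto G T) = MonoidHom.id _ := by
    apply Coprod.hom_ext <;> ext x <;>
      rfl
  exact DFunLike.congr_fun this w

theorem eCfrom_of_true (m : ULift.{v} G) :
    eCfrom G T (of (i := true) m) = Coprod.inl m.down := by
  simp only [eCfrom, CoprodI.lift_of]
  rfl

theorem eCfrom_of_false (m : ULift.{u} T) :
    eCfrom G T (of (i := false) m) = Coprod.inr m.down := by
  simp only [eCfrom, CoprodI.lift_of]
  rfl

/-- iso `(G × T) ∗ ℤ ≃ CoprodI (Ham G T)` -/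
def eHA : (G × T) →* CoprodI (Ham G T) := of (M := Ham G T) (i := (true : Bool))

def eHto : Monoid.Coprod (G × T) (Multiplicative ℤ) →* CoprodI (Ham G T) :=
  Coprod.lift (eHA G T)
    ((of (i := (false : Bool))).comp
      (MulEquiv.ulift (α := Multiplicative ℤ)).symm.toMonoidHom)

/-- the encoding homomorphism on the `Coprod` side -/
def theC : Monoid.Coprod G T →* Monoid.Coprod (G × T) (Multiplicative ℤ) :=
  Coprod.lift (Coprod.inl.comp (MonoidHom.inl G T))
    ((MulAut.conj (Coprod.inr (Multiplicative.ofAdd (1 : ℤ)))).toMonoidHom.comp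
      (Coprod.inl.comp (MonoidHom.inr G T)))

theorem square : (eHto G T).comp (theC G T) = (theI G T).comp (eCto G T) := by
  apply Coprod.hom_ext
  · ext g
    simp only [MonoidHom.comp_apply, theC, eHto, eCto, Coprod.lift_apply_inl,
      MonoidHom.coe_comp, Function.comp_apply]
    erw [theI_of_true]
  · ext x
    simp only [MonoidHom.comp_apply, theC, eHto, eCto, Coprod.lift_apply_inr,
      MonoidHom.coe_comp, Function.comp_apply, MulEquiv.coe_toMonoidHom,
      MulAut.conj_apply, map_mul, map_inv]
    erw [theI_of_false]
    simp only [Coprod.lift_apply_inl, Coprod.lift_apply_inr, tlet]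
    rfl

theorem nontriv (w : Monoid.Coprod G T)
    (h1 : ¬ ∃ g : G, IsConj (Monoid.Coprod.inl g) w)
    (h2 : ¬ ∃ x : T, IsConj (Monoid.Coprod.inr x) w) :
    ¬ ∃ m : G × T, IsConj (Monoid.Coprod.inl m) (theC G T w) := by
  rintro ⟨m, hconj⟩
  rcases isConj_iff.mp hconj with ⟨c, hc⟩
  obtain ⟨l, hl, hpl⟩ := exists_isRed_prodL (eCto G T w)
  have hsq : eHto G T (theC G T w) = theI G T (prodL l) := by
    rw [hpl]
    exact DFunLike.congr_fun (square G T) w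
  have hhyp : ∃ (u : CoprodI (Ham G T)) (mm : G × T),
      u * of (i := (true : Bool)) mm * u⁻¹ = theI G T (prodL l) := by
    refine ⟨eHto G T c, m, ?_⟩
    rw [← hsq, ← hc]
    simp only [map_mul, map_inv, eHto, eHA, Coprod.lift_apply_inl]
    rfl
  obtain ⟨b, m', hconj'⟩ := key G T l.length l le_rfl hl hhyp
  rw [hpl] at hconj'
  have hw : IsConj (eCfrom G T (of m')) w := by
    have := (eCfrom G T).map_isConj hconj'
    rwa [eCfrom_eCto] at this
  cases b
  · exact h2 ⟨m'.down, by erw [eCfrom_of_false] at hw; exact hw⟩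
  · exact h1 ⟨m'.down, by erw [eCfrom_of_true] at hw; exact hw⟩

end Concrete
end BrodskiiAux

namespace BrodskiiAux

theorem subgroup_fg_map {G : Type*} {H : Type*} [Group G] [Group H] (f : G →* H)
    {S : Subgroup G} (h : S.FG) : (S.map f).FG := by
  rcases (Subgroup.fg_iff _).mp h with ⟨s, hs, hfin⟩
  refine (Subgroup.fg_iff _).mpr ⟨f '' s, ?_, hfin.image f⟩
  rw [← hs, MonoidHom.map_closure]

theorem locallyIndicable_prod {G : Type u} {T : Type v} [Group G] [Group T]
    (hG : LocallyIndicable G) (hT : LocallyIndicable T) : LocallyIndicable (G × T) := by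
  intro S hS hSfg
  by_cases h1 : S.map (MonoidHom.fst G T) = ⊥
  · -- all first components trivial; use the second projection
    have hmem : ∀ x ∈ S, (x : G × T).1 = 1 := by
      intro x hx
      have : x.1 ∈ S.map (MonoidHom.fst G T) := ⟨x, hx, rfl⟩
      rw [h1] at this
      exact this
    have h2 : S.map (MonoidHom.snd G T) ≠ ⊥ := by
      intro hbot
      apply hS
      rw [Subgroup.eq_bot_iff_forall]
      intro x hx
      have hx2 : x.2 = 1 := by
        have : x.2 ∈ S.map (MonoidHom.snd G T) := ⟨x, hx, rfl⟩
        rw [hbot] at this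
        exact this
      exact Prod.ext (hmem x hx) hx2
    obtain ⟨f, hf⟩ := hT (S.map (MonoidHom.snd G T)) h2
      (subgroup_fg_map (MonoidHom.snd G T) hSfg)
    exact ⟨f.comp ((MonoidHom.snd G T).subgroupMap S),
      hf.comp ((MonoidHom.snd G T).subgroupMap_surjective S)⟩
  · obtain ⟨f, hf⟩ := hG (S.map (MonoidHom.fst G T)) h1
      (subgroup_fg_map (MonoidHom.fst G T) hSfg)
    exact ⟨f.comp ((MonoidHom.fst G T).subgroupMap S),
      hf.comp ((MonoidHom.fst G T).subgroupMap_surjective S)⟩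

end BrodskiiAux


open BrodskiiAux in
/-- If every nontrivial equation over every locally indicable group is solvable over
that group, then every nontrivial generalized equation with locally indicable
variable group over a locally indicable group is solvable over that group. -/
theorem brodskii_implies_generalized_brodskii
    (brodskii : ∀ (G : Type (max u v)) [Group G], LocallyIndicable G →
      ∀ w : Monoid.Coprod G (Multiplicative ℤ),
        GenEqNontrivial G (Multiplicative ℤ) w → GenEqSolvable G (Multiplicative ℤ) w) :
    ∀ (G : Type u) (T : Type v) [Group G] [Group T],
      LocallyIndicable G → LocallyIndicable T →
      ∀ w : Monoid.Coprod G T, GenEqNontrivial G T w → GenEqSolvable G T w := by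
  intro G T _ _ hG hT w hw
  by_cases hcx : ∃ x : T, IsConj (Monoid.Coprod.inr x) w
  · -- `w` is conjugate into `T`: kill `T` entirely
    obtain ⟨x, hx⟩ := hcx
    rcases isConj_iff.mp hx with ⟨c, hc⟩
    refine ⟨ULift.{v} G, inferInstance, (MulEquiv.ulift (α := G)).symm.toMonoidHom, 1,
      (MulEquiv.ulift (α := G)).symm.injective, ?_⟩
    rw [← hc, map_mul, map_mul, Monoid.Coprod.lift_apply_inr]
    simp
  · have hnt : ¬ ∃ m : G × T, IsConj (Monoid.Coprod.inl m) (theC G T w) :=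
      nontriv G T w hw hcx
    obtain ⟨G', hG', i, f, hinj, hkill⟩ :=
      brodskii (G × T) (locallyIndicable_prod hG hT) (theC G T w) hnt
    refine ⟨G', hG', i.comp (MonoidHom.inl G T),
      ((MulAut.conj (f (Multiplicative.ofAdd (1 : ℤ)))).toMonoidHom).comp
        (i.comp (MonoidHom.inr G T)), ?_, ?_⟩
    · exact hinj.comp (fun a b h => congrArg Prod.fst h)
    · have hfac : Monoid.Coprod.lift (i.comp (MonoidHom.inl G T))
          (((MulAut.conj (f (Multiplicative.ofAdd (1 : ℤ)))).toMonoidHom).comp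
            (i.comp (MonoidHom.inr G T)))
          = (Monoid.Coprod.lift i f).comp (theC G T) := by
        apply Monoid.Coprod.hom_ext
        · ext g
          simp [theC]
        · ext x
          simp [theC, MulAut.conj_apply, map_mul, map_inv]
      rw [hfac, MonoidHom.comp_apply, hkill]
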